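/- Let E be a complex Hilbert space, let C and S be continuous linear maps from E to E with S skew-adjoint (adjoint S = −S). If for every x ∈ E and every t ∈ ℝ one has ⟪exp(t • S) x, C (exp(t • S) x)⟫ = ⟪x, C x⟫, then ⁅C, S⁆ = 0. -/

import Mathlib

open NormedSpace

/-- Necessary condition for invariance: if the quadratic form of `C` is invariant under the
flow generated by the skew-adjoint operator `S`, then `⁅C, S⁆ = 0`. -/
theorem commutator_eq_zero_of_invariant_quadratic_form (E : Type*) [NormedAddCommGroup E]
    [InnerProductSpace ℂ E] [CompleteSpace E] (C S : E →L[ℂ] E)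
    (hS : ContinuousLinearMap.adjoint S = -S)
    (h : ∀ (x : E) (t : ℝ),
      (inner ℂ (exp (t • S) x) (C (exp (t • S) x)) : ℂ) = (inner ℂ x (C x) : ℂ)) :
    ⁅C, S⁆ = 0 := by
  have key : ∀ x : E, (inner ℂ x (⁅C, S⁆ x) : ℂ) = 0 := by
    intro x
    -- the exponential over ℂ agrees with the one over ℝ
    have hexp : (exp : (E →L[ℂ] E) → (E →L[ℂ] E)) = exp :=
      rfl
    have hd : HasDerivAt (fun t : ℝ => exp (t • S)) S 0 := by
      rw [hexp]
      simpa using hasDerivAt_exp_smul_const (𝕂 := ℝ) S 0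
    -- evaluation at x as an ℝ-continuous linear map
    set Φ : (E →L[ℂ] E) →L[ℝ] E :=
      (ContinuousLinearMap.apply ℂ E x).restrictScalars ℝ with hΦ
    have hf : HasDerivAt (fun t : ℝ => exp (t • S) x) (S x) 0 := by
      have := Φ.hasFDerivAt.comp_hasDerivAt 0 hd
      exact this
    have hCf : HasDerivAt (fun t : ℝ => C (exp (t • S) x)) (C (S x)) 0 :=
      ((C.restrictScalars ℝ).hasFDerivAt.comp_hasDerivAt 0 hf :)
    have hinner : HasDerivAt
        (fun t : ℝ => (inner ℂ (exp (t • S) x) (C (exp (t • S) x)) : ℂ))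
        ((inner ℂ (exp ((0 : ℝ) • S) x) (C (S x)) : ℂ)
          + inner ℂ (S x) (C (exp ((0 : ℝ) • S) x))) 0 :=
      hf.inner ℂ hCf
    have hconst : HasDerivAt
        (fun t : ℝ => (inner ℂ (exp (t • S) x) (C (exp (t • S) x)) : ℂ)) 0 0 := by
      have : (fun t : ℝ => (inner ℂ (exp (t • S) x) (C (exp (t • S) x)) : ℂ))
          = fun _ => (inner ℂ x (C x) : ℂ) := funext fun t => h x t
      rw [this]
      exact hasDerivAt_const _ _
    have heq : (inner ℂ x (C (S x)) : ℂ) + inner ℂ (S x) (C x) = 0 := by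
      have := hinner.unique hconst
      simpa [zero_smul, exp_zero] using this
    have hadj : (inner ℂ (S x) (C x) : ℂ) = -inner ℂ x (S (C x)) := by
      rw [← ContinuousLinearMap.adjoint_inner_right, hS]
      simp
    have : (inner ℂ x (C (S x)) : ℂ) - inner ℂ x (S (C x)) = 0 := by
      linear_combination heq - hadj
    simpa [Ring.lie_def, inner_sub_right] using this
  have h0 : ((⁅C, S⁆ : E →L[ℂ] E) : E →ₗ[ℂ] E) = 0 := by
    rw [← inner_map_self_eq_zero]
    intro x
    have := key x
    rw [← inner_conj_symm] at this
    simpa using congrArg (starRingEnd ℂ) this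
  exact ContinuousLinearMap.coe_injective (by rw [h0, ContinuousLinearMap.coe_zero])
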